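/- (Euler formula for mixed-logarithmic homogeneous operators.) Let V be a complex Banach space regarded as real, K : V → V Fréchet differentiable at φ, and suppose K(kφ) = k·K(φ) + k·(p·ln|k| + i·q·arg k)·φ for all complex k near 1, where p,q ∈ ℂ. Then for every η ∈ ℂ: DK(φ)(η·φ) = η·K(φ) + (p·Re η + i·q·Im η)·φ. -/

import Mathlib

open Complex Real Filter

lemma abs_one_add_mul_I (t : ℝ) : ‖(1 + t*Complex.I)‖ = Real.sqrt (1 + t^2) := by
  rw [Complex.norm_def, Complex.normSq_apply]
  simp
  ring_nf

lemma arg_one_add_mul_I (t : ℝ) : Complex.arg (1 + t*Complex.I) = Real.arctan t := by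
  rw [Complex.arg_of_re_nonneg (by simp), Real.arctan_eq_arcsin]
  congr 1
  rw [Complex.norm_def, Complex.normSq_apply]
  simp
  ring_nf

/-- Euler's formula for mixed-logarithmic homogeneous operators: if `K : V → V` is Fréchet
differentiable (over `ℝ`) at `φ` with derivative `D`, and
`K(kφ) = k·K(φ) + k·(p·ln|k| + i·q·arg k)·φ` for all complex `k` near `1`, then
`D(η•φ) = η•K(φ) + (p·Re η + i·q·Im η)•φ` for every `η ∈ ℂ`. -/
theorem euler_mixedLog_homogeneous
    {V : Type*} [NormedAddCommGroup V] [NormedSpace ℂ V]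
    (K : V → V) (φ : V) (p q : ℂ) (D : V →L[ℝ] V)
    (hD : HasFDerivAt K D φ)
    (hhom : ∀ᶠ k in nhds (1 : ℂ), K (k • φ) =
      k • K φ + (k * (p * Real.log ‖k‖ + Complex.I * q * k.arg)) • φ) :
    ∀ η : ℂ, D (η • φ) =
      η • K φ + (p * (η.re : ℂ) + Complex.I * q * (η.im : ℂ)) • φ := by
  have key : ∀ (r : ℝ) (v : V), r • v = (r : ℂ) • v := fun r v =>
    (algebraMap_smul ℂ r v).symm
  -- derivative of t ↦ (t:ℂ) over ℝ
  have hofr : ∀ x : ℝ, HasDerivAt (fun t : ℝ => (t : ℂ)) 1 x := fun x => by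
    exact Complex.ofRealCLM.hasDerivAt (x := x)
  ---- Real direction: D φ = K φ + p • φ
  have hre : D φ = K φ + p • φ := by
    have hc1 : HasDerivAt (fun t : ℝ => (1 : ℂ) + t) 1 0 := (hofr 0).const_add 1
    have hcφ : HasDerivAt (fun t : ℝ => ((1 : ℂ) + t) • φ) φ 0 := by
      simpa using hc1.smul_const φ
    have hD' : HasFDerivAt K D (((1:ℂ) + ((0:ℝ):ℂ)) • φ) := by
      norm_num; exact hD
    have hKc : HasDerivAt (fun t : ℝ => K (((1 : ℂ) + t) • φ)) (D φ) 0 :=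
      hD'.comp_hasDerivAt 0 hcφ
    have hlog : HasDerivAt (fun t : ℝ => Real.log (1 + t)) 1 0 := by
      have h := (Real.hasDerivAt_log (by norm_num : (1 + (0:ℝ)) ≠ 0)).comp 0
        ((hasDerivAt_id (0:ℝ)).const_add 1)
      simpa [Function.comp_def] using h
    have ha : HasDerivAt
        (fun t : ℝ => ((1 : ℂ) + t) * (p * ((Real.log (1 + t) : ℝ) : ℂ))) p 0 := by
      have h := hc1.mul ((hlog.ofReal_comp).const_mul p)
      simpa [Real.log_one, Pi.mul_def] using h
    have hg₀ : HasDerivAt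
        (fun t : ℝ => ((1 : ℂ) + t) • K φ
          + (((1 : ℂ) + t) * (p * ((Real.log (1 + t) : ℝ) : ℂ))) • φ)
        (K φ + p • φ) 0 := by
      simpa [Pi.add_def] using (hc1.smul_const (K φ)).add (ha.smul_const φ)
    have hev : (fun t : ℝ => K (((1 : ℂ) + t) • φ)) =ᶠ[nhds (0:ℝ)]
        (fun t : ℝ => ((1 : ℂ) + t) • K φ
          + (((1 : ℂ) + t) * (p * ((Real.log (1 + t) : ℝ) : ℂ))) • φ) := by
      have htend : Filter.Tendsto (fun t : ℝ => (1 : ℂ) + t) (nhds 0) (nhds 1) := by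
        simpa using hc1.continuousAt.tendsto
      have h1 := htend.eventually hhom
      have h2 : ∀ᶠ t : ℝ in nhds 0, (0:ℝ) < 1 + t := by
        filter_upwards [Ioi_mem_nhds (show (-1:ℝ) < 0 by norm_num)] with t ht
        linarith [Set.mem_Ioi.mp ht]
      filter_upwards [h1, h2] with t h ht
      rw [h]
      have hcast : ((1 : ℂ) + t) = (((1 + t : ℝ)) : ℂ) := by push_cast; ring
      rw [hcast, Complex.norm_real, Real.norm_eq_abs, Complex.arg_ofReal_of_nonneg ht.le,
        abs_of_pos ht]
      push_cast
      ring_nf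
    have := (hg₀.congr_of_eventuallyEq hev).unique hKc
    exact this.symm
  ---- Imaginary direction: D (I • φ) = I • K φ + (I*q) • φ
  have him : D (Complex.I • φ) = Complex.I • K φ + (Complex.I * q) • φ := by
    have hc2 : HasDerivAt (fun t : ℝ => (1 : ℂ) + t * Complex.I) Complex.I 0 := by
      simpa using ((hofr 0).mul_const Complex.I).const_add 1
    have hcφ : HasDerivAt (fun t : ℝ => ((1 : ℂ) + t * Complex.I) • φ)
        (Complex.I • φ) 0 := by
      simpa using hc2.smul_const φ
    have hD' : HasFDerivAt K D (((1:ℂ) + ((0:ℝ):ℂ) * Complex.I) • φ) := by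
      norm_num; exact hD
    have hKc : HasDerivAt (fun t : ℝ => K (((1 : ℂ) + t * Complex.I) • φ))
        (D (Complex.I • φ)) 0 := hD'.comp_hasDerivAt 0 hcφ
    have hlog2 : HasDerivAt (fun t : ℝ => Real.log (1 + t^2) / 2) 0 0 := by
      have hin : HasDerivAt (fun t : ℝ => 1 + t^2) 0 0 := by
        simpa using (hasDerivAt_pow 2 (0:ℝ)).const_add 1
      have h := ((Real.hasDerivAt_log (by norm_num : (1 + (0:ℝ)^2) ≠ 0)).comp 0 hin).div_const 2
      simpa using h
    have hatan : HasDerivAt Real.arctan 1 0 := by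
      simpa using Real.hasDerivAt_arctan 0
    have hb : HasDerivAt
        (fun t : ℝ => p * ((Real.log (1 + t^2) / 2 : ℝ) : ℂ)
          + Complex.I * q * ((Real.arctan t : ℝ) : ℂ)) (Complex.I * q) 0 := by
      have h := ((hlog2.ofReal_comp).const_mul p).add ((hatan.ofReal_comp).const_mul (Complex.I * q))
      simpa [Pi.add_def] using h
    have ha2 : HasDerivAt
        (fun t : ℝ => ((1 : ℂ) + t * Complex.I)
          * (p * ((Real.log (1 + t^2) / 2 : ℝ) : ℂ)
            + Complex.I * q * ((Real.arctan t : ℝ) : ℂ))) (Complex.I * q) 0 := by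
      have h := hc2.mul hb
      simpa [Real.log_one, Real.arctan_zero, Pi.mul_def] using h
    have hg₁ : HasDerivAt
        (fun t : ℝ => ((1 : ℂ) + t * Complex.I) • K φ
          + (((1 : ℂ) + t * Complex.I)
            * (p * ((Real.log (1 + t^2) / 2 : ℝ) : ℂ)
              + Complex.I * q * ((Real.arctan t : ℝ) : ℂ))) • φ)
        (Complex.I • K φ + (Complex.I * q) • φ) 0 := by
      simpa [Pi.add_def] using (hc2.smul_const (K φ)).add (ha2.smul_const φ)
    have hev : (fun t : ℝ => K (((1 : ℂ) + t * Complex.I) • φ)) =ᶠ[nhds (0:ℝ)]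
        (fun t : ℝ => ((1 : ℂ) + t * Complex.I) • K φ
          + (((1 : ℂ) + t * Complex.I)
            * (p * ((Real.log (1 + t^2) / 2 : ℝ) : ℂ)
              + Complex.I * q * ((Real.arctan t : ℝ) : ℂ))) • φ) := by
      have htend : Filter.Tendsto (fun t : ℝ => (1 : ℂ) + t * Complex.I)
          (nhds 0) (nhds 1) := by
        simpa using hc2.continuousAt.tendsto
      filter_upwards [htend.eventually hhom] with t h
      rw [h, abs_one_add_mul_I, arg_one_add_mul_I,
        Real.log_sqrt (by positivity)]
    have := (hg₁.congr_of_eventuallyEq hev).unique hKc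
    exact this.symm
  ---- combine
  intro η
  have hsplit : η • φ = (η.re : ℝ) • φ + (η.im : ℝ) • (Complex.I • φ) := by
    rw [key, key, smul_smul, ← add_smul, Complex.re_add_im]
  rw [hsplit, map_add, D.map_smul, D.map_smul, hre, him,
    key (η.re) _, key (η.im) _]
  have hη : η = (η.re : ℂ) + (η.im : ℂ) * Complex.I := (Complex.re_add_im η).symm
  rw [hη]
  simp only [Complex.ofReal_re, Complex.ofReal_im, Complex.add_re, Complex.add_im,
    Complex.mul_re, Complex.mul_im, Complex.I_re, Complex.I_im]
  module
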